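/- A 2-dimensional subspace V ⊆ ℂ^m ⊗ ℂ² is an entanglement-breaking space if and only if there exist vectors x, y ∈ ℂ^m and an orthonormal basis f₀, f₁ of ℂ² such that V = span{x ⊗ f₀, y ⊗ f₁}. -/

import Mathlib

open scoped BigOperators ComplexOrder
open Kronecker

noncomputable section

/-- The `j`-th standard basis vector of `ℂ^q` (zero if `j ≥ q`). -/
def ee (q : ℕ) (j : ℕ) : Fin q → ℂ := fun b => if (b : ℕ) = j then 1 else 0

/-- Tensor (Kronecker) product of two vectors. -/
def tens {A B : Type*} (x : A → ℂ) (y : B → ℂ) : A × B → ℂ := fun p => x p.1 * y p.2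

/-- A matrix on `ℂ^A ⊗ ℂ^B` is separable if it is a finite sum of Kronecker products of
rank-one positive semidefinite matrices. -/
def IsSep {A B : Type*} (ρ : Matrix (A × B) (A × B) ℂ) : Prop :=
  ∃ (T : ℕ) (x : Fin T → A → ℂ) (y : Fin T → B → ℂ),
    ρ = ∑ t : Fin T, Matrix.of (fun p q : A × B =>
      (x t p.1 * (starRingEnd ℂ) (x t q.1)) * (y t p.2 * (starRingEnd ℂ) (y t q.2)))

/-- Partial trace over the middle (B) system of the rank-one projection `|Ψ⟩⟨Ψ|`. -/
def TrB {A B : Type*} [Fintype B] {k : ℕ} (Ψ : A × B × Fin k → ℂ) :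
    Matrix (A × Fin k) (A × Fin k) ℂ :=
  Matrix.of fun p q => ∑ b : B, Ψ (p.1, b, p.2) * (starRingEnd ℂ) (Ψ (q.1, b, q.2))

/-- A subspace `V ⊆ ℂ^A ⊗ ℂ^B` is entanglement breaking if for every ancilla dimension
`k ≥ 1` and every `Ψ` whose slices all lie in `V`, the matrix `Tr_B |Ψ⟩⟨Ψ|` is separable. -/
def IsEBSpace {A B : Type*} [Fintype B] (V : Submodule ℂ (A × B → ℂ)) : Prop :=
  ∀ (k : ℕ), 1 ≤ k → ∀ Ψ : A × B × Fin k → ℂ,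
    (∀ ℓ : Fin k, (fun ab : A × B => Ψ (ab.1, ab.2, ℓ)) ∈ V) → IsSep (TrB Ψ)

/-- Partial transpose on the B system. -/
def PT {A B : Type*} (ρ : Matrix (A × B) (A × B) ℂ) : Matrix (A × B) (A × B) ℂ :=
  Matrix.of fun p q => ρ (p.1, q.2) (q.1, p.2)

/-- Partial trace over the B system of a matrix. -/
def trBmat {A B : Type*} [Fintype B] (ρ : Matrix (A × B) (A × B) ℂ) : Matrix A A ℂ :=
  Matrix.of fun a a' => ∑ b : B, ρ (a, b) (a', b)

/-- Partial trace over the A system of a matrix. -/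
def trAmat {A B : Type*} [Fintype A] (ρ : Matrix (A × B) (A × B) ℂ) : Matrix B B ℂ :=
  Matrix.of fun b b' => ∑ a : A, ρ (a, b) (a, b')

section Helpers

open Submodule Set Module

variable {M : Type*} [AddCommGroup M] [Module ℂ M]

lemma not_li_smul_pair (z : M) (a b : ℂ) : ¬ LinearIndependent ℂ ![a • z, b • z] := by
  intro h
  obtain ⟨hb, ha⟩ := LinearIndependent.pair_iff.mp h b (-a) (by module)
  have ha' : a = 0 := by simpa using ha
  have := h.ne_zero 0
  simp [ha'] at this

lemma pair_eq_smul {u v : M} (h : ¬ LinearIndependent ℂ ![u, v]) (hu : u ≠ 0) :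
    ∃ c : ℂ, v = c • u := by
  rw [LinearIndependent.pair_iff' hu] at h
  push_neg at h
  obtain ⟨a, ha⟩ := h
  exact ⟨a, ha.symm⟩

lemma exists_common_of_not_li {u v : M} (h : ¬ LinearIndependent ℂ ![u, v]) :
    ∃ (z : M) (a b : ℂ), u = a • z ∧ v = b • z ∧ (z = u ∨ z = v) := by
  by_cases hu : u = 0
  · exact ⟨v, 0, 1, by simp [hu], by simp, Or.inr rfl⟩
  · obtain ⟨c, hc⟩ := pair_eq_smul h hu
    exact ⟨u, 1, c, by simp, hc, Or.inl rfl⟩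

lemma finrank_span_singleton_le [FiniteDimensional ℂ M] (u : M) :
    finrank ℂ (span ℂ ({u} : Set M)) ≤ 1 := by
  by_cases hu : u = 0
  · rw [hu, Submodule.span_zero_singleton]
    simp
  · exact le_of_eq (finrank_span_singleton hu)

lemma finrank_span_pair_le [FiniteDimensional ℂ M] (u v : M) :
    finrank ℂ (span ℂ ({u, v} : Set M)) ≤ 2 := by
  have : span ℂ ({u, v} : Set M) = (ℂ ∙ u) ⊔ (ℂ ∙ v) := by
    rw [show ({u, v} : Set M) = insert u {v} from rfl, Submodule.span_insert]
  rw [this]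
  calc finrank ℂ ((ℂ ∙ u) ⊔ (ℂ ∙ v) : Submodule ℂ M)
      ≤ finrank ℂ (ℂ ∙ u) + finrank ℂ (ℂ ∙ v) :=
        Submodule.finrank_add_le_finrank_add_finrank _ _
    _ ≤ 1 + 1 := add_le_add (finrank_span_singleton_le u) (finrank_span_singleton_le v)

lemma range_two {α : Type*} (f : Fin 2 → α) : Set.range f = {f 0, f 1} := by
  ext z
  constructor
  · rintro ⟨i, rfl⟩; fin_cases i <;> simp
  · rintro (rfl | rfl)
    exacts [⟨0, rfl⟩, ⟨1, rfl⟩]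

lemma finrank_span_pair_eq [FiniteDimensional ℂ M] {u v : M}
    (h : LinearIndependent ℂ ![u, v]) : finrank ℂ (span ℂ ({u, v} : Set M)) = 2 := by
  have := finrank_span_eq_card h
  rw [range_two ![u, v]] at this
  simp only [Matrix.cons_val_zero, Matrix.cons_val_one, Fintype.card_fin] at this
  exact this

lemma exists_li_pair [FiniteDimensional ℂ M] {n : ℕ} (π : Fin n → M)
    (h2 : 2 ≤ finrank ℂ (span ℂ (Set.range π))) :
    ∃ t s, LinearIndependent ℂ ![π t, π s] := by
  by_contra hall
  push_neg at hall
  have h0 : ∃ t₀, π t₀ ≠ 0 := by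
    by_contra h
    push_neg at h
    have : span ℂ (Set.range π) ≤ ⊥ := by
      rw [span_le]; rintro _ ⟨t, rfl⟩; simp [h t]
    have h4 : finrank ℂ (span ℂ (Set.range π)) ≤ 0 := by
      simpa [finrank_bot] using Submodule.finrank_mono this
    omega
  obtain ⟨t₀, ht₀⟩ := h0
  have hle : span ℂ (Set.range π) ≤ ℂ ∙ π t₀ := by
    rw [span_le]
    rintro _ ⟨t, rfl⟩
    obtain ⟨c, hc⟩ := pair_eq_smul (hall t₀ t) ht₀
    exact Submodule.mem_span_singleton.mpr ⟨c, hc.symm⟩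
  have := Submodule.finrank_mono hle
  rw [finrank_span_singleton ht₀] at this
  omega

lemma key_span {ι : Type*} [Fintype ι] {nb nt : ℕ}
    (g : Fin nb → ι → ℂ) (π : Fin nt → ι → ℂ)
    (h : ∀ p q : ι, ∑ b, g b p * (starRingEnd ℂ) (g b q)
        = ∑ t, π t p * (starRingEnd ℂ) (π t q)) :
    ∀ t, π t ∈ Submodule.span ℂ (Set.range g) := by
  classical
  intro t
  set toE : (ι → ℂ) ≃ₗ[ℂ] EuclideanSpace ℂ ι := (WithLp.linearEquiv 2 ℂ (ι → ℂ)).symm with htoE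
  set S : Submodule ℂ (EuclideanSpace ℂ ι) :=
    Submodule.span ℂ (Set.range (fun b => toE (g b))) with hS
  have happ : ∀ (v : ι → ℂ) (u : EuclideanSpace ℂ ι),
      (inner ℂ (toE v) u : ℂ) = ∑ p, (starRingEnd ℂ) (v p) * (toE.symm u) p := by
    intro v u
    simp [PiLp.inner_apply, RCLike.inner_apply, htoE, mul_comm]
  have happ' : ∀ (v : ι → ℂ) (u : EuclideanSpace ℂ ι),
      (inner ℂ u (toE v) : ℂ) = ∑ p, (starRingEnd ℂ) ((toE.symm u) p) * v p := by
    intro v u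
    simp [PiLp.inner_apply, RCLike.inner_apply, htoE, mul_comm]
  have hmem : toE (π t) ∈ S := by
    rw [← Submodule.orthogonal_orthogonal S, Submodule.mem_orthogonal]
    intro u hu
    set u' : ι → ℂ := toE.symm u with hu'
    set w : Fin nt → ℂ := fun s => ∑ p, (starRingEnd ℂ) (u' p) * π s p with hw
    set z : Fin nb → ℂ := fun b => ∑ p, (starRingEnd ℂ) (u' p) * g b p with hzdef
    have hz : ∀ b, (starRingEnd ℂ) (z b) = 0 := by
      intro b
      have h1 : (inner ℂ (toE (g b)) u : ℂ) = 0 :=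
        (Submodule.mem_orthogonal S u).mp hu _ (Submodule.subset_span ⟨b, rfl⟩)
      rw [happ] at h1
      rw [hzdef]
      rw [map_sum]
      rw [← h1]
      exact Finset.sum_congr rfl fun p _ => by simp [map_mul]; ring
    have lhs : ∀ (N : ℕ) (f : Fin N → ι → ℂ),
        (∑ j, (∑ p, (starRingEnd ℂ) (u' p) * f j p) *
            (starRingEnd ℂ) (∑ p, (starRingEnd ℂ) (u' p) * f j p))
        = ∑ p, ∑ q, (starRingEnd ℂ) (u' p) *
            (∑ j, f j p * (starRingEnd ℂ) (f j q)) * u' q := by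
      intro N f
      have conjA : ∀ j, (starRingEnd ℂ) (∑ p, (starRingEnd ℂ) (u' p) * f j p)
          = ∑ q, (starRingEnd ℂ) (f j q) * u' q := by
        intro j
        rw [map_sum]
        exact Finset.sum_congr rfl fun q _ => by simp [map_mul]; ring
      calc (∑ j, (∑ p, (starRingEnd ℂ) (u' p) * f j p) *
            (starRingEnd ℂ) (∑ p, (starRingEnd ℂ) (u' p) * f j p))
          = ∑ j, ∑ p, ∑ q, (starRingEnd ℂ) (u' p) *
              (f j p * (starRingEnd ℂ) (f j q)) * u' q := by
            refine Finset.sum_congr rfl fun j _ => ?_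
            rw [conjA j, Finset.sum_mul_sum]
            exact Finset.sum_congr rfl fun p _ =>
              Finset.sum_congr rfl fun q _ => by ring
        _ = ∑ p, ∑ j, ∑ q, (starRingEnd ℂ) (u' p) *
              (f j p * (starRingEnd ℂ) (f j q)) * u' q := Finset.sum_comm
        _ = ∑ p, ∑ q, ∑ j, (starRingEnd ℂ) (u' p) *
              (f j p * (starRingEnd ℂ) (f j q)) * u' q :=
            Finset.sum_congr rfl fun p _ => Finset.sum_comm
        _ = ∑ p, ∑ q, (starRingEnd ℂ) (u' p) *
              (∑ j, f j p * (starRingEnd ℂ) (f j q)) * u' q := by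
            refine Finset.sum_congr rfl fun p _ => Finset.sum_congr rfl fun q _ => ?_
            rw [Finset.mul_sum, Finset.sum_mul]
    have hkey : (∑ b, z b * (starRingEnd ℂ) (z b)) = ∑ s, w s * (starRingEnd ℂ) (w s) := by
      rw [hzdef, hw, lhs nb g, lhs nt π]
      exact Finset.sum_congr rfl fun p _ => Finset.sum_congr rfl fun q _ => by rw [h p q]
    have hzero : (∑ s, w s * (starRingEnd ℂ) (w s)) = 0 := by
      rw [← hkey]
      exact Finset.sum_eq_zero fun b _ => by rw [hz b, mul_zero]
    have hreal : ∑ s, Complex.normSq (w s) = 0 := by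
      have : ((∑ s, Complex.normSq (w s) : ℝ) : ℂ) = 0 := by
        push_cast
        rw [← hzero]
        exact Finset.sum_congr rfl fun s _ => (Complex.mul_conj (w s)).symm
      exact_mod_cast this
    have hwt : w t = 0 := by
      have := (Finset.sum_eq_zero_iff_of_nonneg
        (fun s _ => Complex.normSq_nonneg (w s))).mp hreal t (Finset.mem_univ t)
      exact Complex.normSq_eq_zero.mp this
    rw [happ']
    exact hwt
  obtain ⟨c, hc⟩ := mem_span_range_iff_exists_fun ℂ |>.mp hmem
  refine mem_span_range_iff_exists_fun ℂ |>.mpr ⟨c, ?_⟩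
  apply toE.injective
  rw [map_sum, ← hc]
  exact Finset.sum_congr rfl fun b _ => by rw [map_smul]

lemma tens_smul_left {A B : Type*} (a : ℂ) (x : A → ℂ) (y : B → ℂ) :
    tens (a • x) y = a • tens x y := by
  funext p; simp [tens, smul_eq_mul]; ring

lemma tens_smul_right {A B : Type*} (a : ℂ) (x : A → ℂ) (y : B → ℂ) :
    tens x (a • y) = a • tens x y := by
  funext p; simp [tens, smul_eq_mul]; ring

lemma tens_add_right {A B : Type*} (x : A → ℂ) (y z : B → ℂ) :
    tens x (y + z) = tens x y + tens x z := by
  funext p; simp [tens, mul_add]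

lemma tens_eq_zero_left {A B : Type*} {x : A → ℂ} {y : B → ℂ}
    (h : tens x y = 0) (hy : y ≠ 0) : x = 0 := by
  obtain ⟨b, hb⟩ := Function.ne_iff.mp hy
  funext a
  have := congrFun h (a, b)
  simp [tens] at this
  rcases this with h' | h'
  · exact h'
  · exact absurd h' hb

end Helpers

section Forward

open Submodule Set Module

lemma tens_ee_li {m : ℕ} {x1 x2 : Fin m → ℂ} (h1 : x1 ≠ 0) (h2 : x2 ≠ 0) :
    LinearIndependent ℂ ![tens x1 (ee 2 0), tens x2 (ee 2 1)] := by
  obtain ⟨a1, ha1⟩ := Function.ne_iff.mp h1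
  obtain ⟨a2, ha2⟩ := Function.ne_iff.mp h2
  rw [LinearIndependent.pair_iff]
  intro s t hst
  constructor
  · have := congrFun hst (a1, 0)
    simp [tens, ee, Pi.add_apply, Pi.smul_apply, smul_eq_mul] at this
    rcases this with h | h
    · exact h
    · exact absurd h ha1
  · have := congrFun hst (a2, 1)
    simp [tens, ee, Pi.add_apply, Pi.smul_apply, smul_eq_mul] at this
    rcases this with h | h
    · exact h
    · exact absurd h ha2

lemma forward_dir {m : ℕ} (V : Submodule ℂ (Fin m × Fin 2 → ℂ))
    (hdim : Module.finrank ℂ V = 2) (hEB : IsEBSpace V) :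
    ∃ (x y : Fin m → ℂ) (f₀ f₁ : Fin 2 → ℂ),
      (∑ b : Fin 2, (starRingEnd ℂ) (f₀ b) * f₀ b) = 1 ∧
      (∑ b : Fin 2, (starRingEnd ℂ) (f₁ b) * f₁ b) = 1 ∧
      (∑ b : Fin 2, (starRingEnd ℂ) (f₀ b) * f₁ b) = 0 ∧
      V = Submodule.span ℂ {tens x f₀, tens y f₁} := by
  classical
  -- get a basis v, w of V
  set B := Module.finBasisOfFinrankEq (R := ℂ) (M := V) hdim with hB
  set v : Fin m × Fin 2 → ℂ := (B 0 : Fin m × Fin 2 → ℂ) with hv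
  set w : Fin m × Fin 2 → ℂ := (B 1 : Fin m × Fin 2 → ℂ) with hw
  have hvV : v ∈ V := (B 0).2
  have hwV : w ∈ V := (B 1).2
  have hli : LinearIndependent ℂ ![v, w] := by
    have h := B.linearIndependent.map' V.subtype (Submodule.ker_subtype V)
    have he : ![v, w] = V.subtype ∘ B := by
      funext i; fin_cases i <;> rfl
    rw [he]
    exact h
  have hspan : V = span ℂ {v, w} := by
    have hs := B.span_eq
    have h1 : Submodule.map V.subtype (span ℂ (Set.range B)) = V := by
      rw [hs, Submodule.map_top, Submodule.range_subtype]
    rw [Submodule.map_span] at h1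
    rw [← h1]
    congr 1
    rw [← Set.range_comp, range_two (V.subtype ∘ B)]
    rfl
  -- first application of EB
  set Ψ₁ : Fin m × Fin 2 × Fin 2 → ℂ :=
    fun r => if r.2.2 = 0 then v (r.1, r.2.1) else w (r.1, r.2.1) with hΨ₁
  have hsl : ∀ ℓ : Fin 2, (fun ab : Fin m × Fin 2 => Ψ₁ (ab.1, ab.2, ℓ)) ∈ V := by
    intro ℓ
    fin_cases ℓ
    · simpa [hΨ₁] using hvV
    · simpa [hΨ₁] using hwV
  obtain ⟨T, xs, ys, hρ⟩ := hEB 2 (by norm_num) Ψ₁ hsl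
  set g : Fin 2 → (Fin m × Fin 2 → ℂ) := fun b p => Ψ₁ (p.1, b, p.2) with hg
  set π : Fin T → (Fin m × Fin 2 → ℂ) := fun t => tens (xs t) (ys t) with hπ
  have hq : ∀ p q : Fin m × Fin 2,
      ∑ b : Fin 2, g b p * (starRingEnd ℂ) (g b q)
        = ∑ t : Fin T, π t p * (starRingEnd ℂ) (π t q) := by
    intro p q
    have h1 := congrFun (congrFun hρ p) q
    rw [Matrix.sum_apply] at h1
    rw [show (∑ b : Fin 2, g b p * (starRingEnd ℂ) (g b q)) = TrB Ψ₁ p q from rfl, h1]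
    exact Finset.sum_congr rfl fun t _ => by simp [hπ, tens, map_mul]; ring
  have hπS := key_span g π hq
  have hgS := key_span π g (fun p q => (hq p q).symm)
  have hg0 : ∀ (b : Fin 2) (a : Fin m), g b (a, 0) = v (a, b) := by
    intro b a; simp [hg, hΨ₁]
  have hg1 : ∀ (b : Fin 2) (a : Fin m), g b (a, 1) = w (a, b) := by
    intro b a; simp [hg, hΨ₁]
  by_cases hG : LinearIndependent ℂ ![g 0, g 1]
  · have hrg : Set.range g = {g 0, g 1} := range_two g
    have hUfr : finrank ℂ (span ℂ (Set.range g)) = 2 := by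
      rw [hrg]; exact finrank_span_pair_eq hG
    have hUπ : span ℂ (Set.range π) = span ℂ (Set.range g) := by
      apply le_antisymm
      · rw [span_le]; rintro _ ⟨t, rfl⟩; exact hπS t
      · rw [span_le]; rintro _ ⟨b, rfl⟩; exact hgS b
    obtain ⟨t1, t2, hPQ⟩ := exists_li_pair π (by rw [hUπ, hUfr])
    have hP0 : π t1 ≠ 0 := by simpa using hPQ.ne_zero 0
    have hQ0 : π t2 ≠ 0 := by simpa using hPQ.ne_zero 1
    have hx1 : xs t1 ≠ 0 := by
      intro h; apply hP0; funext p; simp [hπ, tens, h]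
    have hx2 : xs t2 ≠ 0 := by
      intro h; apply hQ0; funext p; simp [hπ, tens, h]
    have hspanPQ : span ℂ ({π t1, π t2} : Set (Fin m × Fin 2 → ℂ)) = span ℂ (Set.range g) := by
      apply Submodule.eq_of_le_of_finrank_le
      · rw [span_le]
        intro u hu
        simp only [Set.mem_insert_iff, Set.mem_singleton_iff] at hu
        rcases hu with rfl | rfl
        · exact hπS t1
        · exact hπS t2
      · rw [hUfr, finrank_span_pair_eq hPQ]
    have hgPQ : ∀ b : Fin 2, ∃ l mm : ℂ, l • π t1 + mm • π t2 = g b := by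
      intro b
      apply Submodule.mem_span_pair.mp
      rw [hspanPQ, ← hUπ]
      exact hgS b
    choose lc mc hlm using hgPQ
    have hv2 : v = ys t1 0 • tens (xs t1) lc + ys t2 0 • tens (xs t2) mc := by
      funext p; obtain ⟨α, β⟩ := p
      have h6 := congrFun (hlm β) (α, 0)
      rw [← hg0 β α, ← h6]
      simp only [hπ, tens, Pi.add_apply, Pi.smul_apply, smul_eq_mul]
      ring
    have hw2 : w = ys t1 1 • tens (xs t1) lc + ys t2 1 • tens (xs t2) mc := by
      funext p; obtain ⟨α, β⟩ := p
      have h6 := congrFun (hlm β) (α, 1)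
      rw [← hg1 β α, ← h6]
      simp only [hπ, tens, Pi.add_apply, Pi.smul_apply, smul_eq_mul]
      ring
    have hVW : V = span ℂ ({tens (xs t1) lc, tens (xs t2) mc} : Set (Fin m × Fin 2 → ℂ)) := by
      have hle : V ≤ span ℂ ({tens (xs t1) lc, tens (xs t2) mc} : Set (Fin m × Fin 2 → ℂ)) := by
        rw [hspan, span_le]
        intro u hu
        simp only [Set.mem_insert_iff, Set.mem_singleton_iff] at hu
        rcases hu with rfl | rfl
        · rw [hv2]
          exact add_mem (smul_mem _ _ (subset_span (Set.mem_insert _ _)))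
            (smul_mem _ _ (subset_span (Set.mem_insert_of_mem _ rfl)))
        · rw [hw2]
          exact add_mem (smul_mem _ _ (subset_span (Set.mem_insert _ _)))
            (smul_mem _ _ (subset_span (Set.mem_insert_of_mem _ rfl)))
      exact Submodule.eq_of_le_of_finrank_le hle (by rw [hdim]; exact finrank_span_pair_le _ _)
    have hlcmc : LinearIndependent ℂ ![lc, mc] := by
      rw [LinearIndependent.pair_iff]
      intro s t hst
      have hpt : ∀ β : Fin 2, s * lc β + t * mc β = 0 := by
        intro β
        have := congrFun hst β
        simpa [Pi.add_apply, Pi.smul_apply, smul_eq_mul] using this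
      constructor
      · by_contra hs
        have hlc : ∀ β, lc β = (-t / s) * mc β := by
          intro β
          field_simp
          linear_combination hpt β
        have hgz : ∀ β : Fin 2, g β = mc β • ((-t / s) • π t1 + π t2) := by
          intro β
          rw [← hlm β]
          funext p
          simp only [Pi.add_apply, Pi.smul_apply, smul_eq_mul, hlc β]
          ring
        have he2 : ![g 0, g 1]
            = ![mc 0 • ((-t / s) • π t1 + π t2), mc 1 • ((-t / s) • π t1 + π t2)] := by
          funext i; fin_cases i <;> simp [hgz]
        exact not_li_smul_pair _ (mc 0) (mc 1) (he2 ▸ hG)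
      · by_contra ht
        have hmc : ∀ β, mc β = (-s / t) * lc β := by
          intro β
          field_simp
          linear_combination hpt β
        have hgz : ∀ β : Fin 2, g β = lc β • (π t1 + (-s / t) • π t2) := by
          intro β
          rw [← hlm β]
          funext p
          simp only [Pi.add_apply, Pi.smul_apply, smul_eq_mul, hmc β]
          ring
        have he2 : ![g 0, g 1]
            = ![lc 0 • (π t1 + (-s / t) • π t2), lc 1 • (π t1 + (-s / t) • π t2)] := by
          funext i; fin_cases i <;> simp [hgz]
        exact not_li_smul_pair _ (lc 0) (lc 1) (he2 ▸ hG)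
    by_cases hx : LinearIndependent ℂ ![xs t1, xs t2]
    · set cval : ℂ := ∑ b : Fin 2, (starRingEnd ℂ) (lc b) * mc b with hcval
      by_cases hcz : cval = 0
      · -- orthogonal: normalize and conclude
        have hlc0 : lc ≠ 0 := by simpa using hlcmc.ne_zero 0
        have hmc0 : mc ≠ 0 := by simpa using hlcmc.ne_zero 1
        have hS0pos : 0 < ∑ b : Fin 2, Complex.normSq (lc b) := by
          obtain ⟨β, hβ'⟩ := Function.ne_iff.mp hlc0
          have hβ : lc β ≠ 0 := by simpa using hβ'
          exact Finset.sum_pos' (fun b _ => Complex.normSq_nonneg _)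
            ⟨β, Finset.mem_univ β, Complex.normSq_pos.mpr hβ⟩
        have hS1pos : 0 < ∑ b : Fin 2, Complex.normSq (mc b) := by
          obtain ⟨β, hβ'⟩ := Function.ne_iff.mp hmc0
          have hβ : mc β ≠ 0 := by simpa using hβ'
          exact Finset.sum_pos' (fun b _ => Complex.normSq_nonneg _)
            ⟨β, Finset.mem_univ β, Complex.normSq_pos.mpr hβ⟩
        set S0 : ℝ := ∑ b : Fin 2, Complex.normSq (lc b) with hS0def
        set S1 : ℝ := ∑ b : Fin 2, Complex.normSq (mc b) with hS1def
        set r0 : ℝ := Real.sqrt S0 with hr0def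
        set r1 : ℝ := Real.sqrt S1 with hr1def
        have hr0pos : 0 < r0 := Real.sqrt_pos.mpr hS0pos
        have hr1pos : 0 < r1 := Real.sqrt_pos.mpr hS1pos
        have hr0C : ((r0 : ℂ)) ≠ 0 := Complex.ofReal_ne_zero.mpr hr0pos.ne'
        have hr1C : ((r1 : ℂ)) ≠ 0 := Complex.ofReal_ne_zero.mpr hr1pos.ne'
        have hsq0 : (r0 : ℂ) * (r0 : ℂ) = (S0 : ℂ) := by
          rw [← Complex.ofReal_mul, Real.mul_self_sqrt hS0pos.le]
        have hsq1 : (r1 : ℂ) * (r1 : ℂ) = (S1 : ℂ) := by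
          rw [← Complex.ofReal_mul, Real.mul_self_sqrt hS1pos.le]
        refine ⟨(r0 : ℂ) • xs t1, (r1 : ℂ) • xs t2,
          ((r0 : ℂ))⁻¹ • lc, ((r1 : ℂ))⁻¹ • mc, ?_, ?_, ?_, ?_⟩
        · have hterm : ∀ b : Fin 2,
              (starRingEnd ℂ) ((((r0 : ℂ))⁻¹ • lc) b) * (((r0 : ℂ))⁻¹ • lc) b
                = ((r0 : ℂ) * (r0 : ℂ))⁻¹ * ((starRingEnd ℂ) (lc b) * lc b) := by
            intro b
            simp only [Pi.smul_apply, smul_eq_mul, map_mul, map_inv₀, Complex.conj_ofReal,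
              mul_inv]
            ring
          rw [Finset.sum_congr rfl fun b _ => hterm b, ← Finset.mul_sum, hsq0]
          have hsum : (∑ b : Fin 2, (starRingEnd ℂ) (lc b) * lc b) = (S0 : ℂ) := by
            rw [hS0def]
            push_cast
            exact Finset.sum_congr rfl fun b _ => (Complex.normSq_eq_conj_mul_self).symm ▸ rfl
          rw [hsum]
          exact inv_mul_cancel₀ (by exact_mod_cast hS0pos.ne')
        · have hterm : ∀ b : Fin 2,
              (starRingEnd ℂ) ((((r1 : ℂ))⁻¹ • mc) b) * (((r1 : ℂ))⁻¹ • mc) b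
                = ((r1 : ℂ) * (r1 : ℂ))⁻¹ * ((starRingEnd ℂ) (mc b) * mc b) := by
            intro b
            simp only [Pi.smul_apply, smul_eq_mul, map_mul, map_inv₀, Complex.conj_ofReal,
              mul_inv]
            ring
          rw [Finset.sum_congr rfl fun b _ => hterm b, ← Finset.mul_sum, hsq1]
          have hsum : (∑ b : Fin 2, (starRingEnd ℂ) (mc b) * mc b) = (S1 : ℂ) := by
            rw [hS1def]
            push_cast
            exact Finset.sum_congr rfl fun b _ => (Complex.normSq_eq_conj_mul_self).symm ▸ rfl
          rw [hsum]
          exact inv_mul_cancel₀ (by exact_mod_cast hS1pos.ne')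
        · have hterm : ∀ b : Fin 2,
              (starRingEnd ℂ) ((((r0 : ℂ))⁻¹ • lc) b) * (((r1 : ℂ))⁻¹ • mc) b
                = ((r0 : ℂ))⁻¹ * ((r1 : ℂ))⁻¹ * ((starRingEnd ℂ) (lc b) * mc b) := by
            intro b
            simp only [Pi.smul_apply, smul_eq_mul, map_mul, map_inv₀, Complex.conj_ofReal]
            ring
          rw [Finset.sum_congr rfl fun b _ => hterm b, ← Finset.mul_sum, ← hcval, hcz, mul_zero]
        · have ht0 : tens ((r0 : ℂ) • xs t1) (((r0 : ℂ))⁻¹ • lc) = tens (xs t1) lc := by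
            rw [tens_smul_left, tens_smul_right, smul_smul, mul_inv_cancel₀ hr0C, one_smul]
          have ht1 : tens ((r1 : ℂ) • xs t2) (((r1 : ℂ))⁻¹ • mc) = tens (xs t2) mc := by
            rw [tens_smul_left, tens_smul_right, smul_smul, mul_inv_cancel₀ hr1C, one_smul]
          rw [ht0, ht1]
          exact hVW
      · -- non-orthogonal: derive a contradiction from a second EB application
        exfalso
        set Ψ₂ : Fin m × Fin 2 × Fin 2 → ℂ :=
          fun r => if r.2.2 = 0 then xs t1 r.1 * lc r.2.1 else xs t2 r.1 * mc r.2.1 with hΨ₂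
        have hsl2 : ∀ ℓ : Fin 2, (fun ab : Fin m × Fin 2 => Ψ₂ (ab.1, ab.2, ℓ)) ∈ V := by
          intro ℓ
          fin_cases ℓ
          · have hmm : (fun ab : Fin m × Fin 2 => Ψ₂ (ab.1, ab.2, (0 : Fin 2))) ∈ V := by
              have he : (fun ab : Fin m × Fin 2 => Ψ₂ (ab.1, ab.2, (0 : Fin 2)))
                  = tens (xs t1) lc := by
                funext ab; simp [hΨ₂, tens]
              rw [he, hVW]
              exact subset_span (Set.mem_insert _ _)
            exact hmm
          · have hmm : (fun ab : Fin m × Fin 2 => Ψ₂ (ab.1, ab.2, (1 : Fin 2))) ∈ V := by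
              have he : (fun ab : Fin m × Fin 2 => Ψ₂ (ab.1, ab.2, (1 : Fin 2)))
                  = tens (xs t2) mc := by
                funext ab; simp [hΨ₂, tens]
              rw [he, hVW]
              exact subset_span (Set.mem_insert_of_mem _ rfl)
            exact hmm
        obtain ⟨T', xs', ys', hρ'⟩ := hEB 2 (by norm_num) Ψ₂ hsl2
        set g' : Fin 2 → (Fin m × Fin 2 → ℂ) := fun b p => Ψ₂ (p.1, b, p.2) with hg'
        set π' : Fin T' → (Fin m × Fin 2 → ℂ) := fun t => tens (xs' t) (ys' t) with hπ'
        have hq' : ∀ p q : Fin m × Fin 2,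
            ∑ b : Fin 2, g' b p * (starRingEnd ℂ) (g' b q)
              = ∑ t : Fin T', π' t p * (starRingEnd ℂ) (π' t q) := by
          intro p q
          have h1 := congrFun (congrFun hρ' p) q
          rw [Matrix.sum_apply] at h1
          rw [show (∑ b : Fin 2, g' b p * (starRingEnd ℂ) (g' b q)) = TrB Ψ₂ p q from rfl, h1]
          exact Finset.sum_congr rfl fun t _ => by simp [hπ', tens, map_mul]; ring
        have hπS' := key_span g' π' hq'
        have hg'E : ∀ b : Fin 2,
            g' b = lc b • tens (xs t1) (ee 2 0) + mc b • tens (xs t2) (ee 2 1) := by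
          intro b
          funext p
          obtain ⟨α, ℓ⟩ := p
          fin_cases ℓ <;>
            simp [hg', hΨ₂, tens, ee, Pi.add_apply, Pi.smul_apply, smul_eq_mul, mul_comm]
        have hsub : span ℂ (Set.range g')
            ≤ span ℂ ({tens (xs t1) (ee 2 0), tens (xs t2) (ee 2 1)} : Set _) := by
          rw [span_le]
          rintro _ ⟨b, rfl⟩
          rw [hg'E b]
          exact add_mem (smul_mem _ _ (subset_span (Set.mem_insert _ _)))
            (smul_mem _ _ (subset_span (Set.mem_insert_of_mem _ rfl)))
        have hzero : ∀ (t : Fin T') (α α' : Fin m),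
            π' t (α, 0) * (starRingEnd ℂ) (π' t (α', 1)) = 0 := by
          intro t α α'
          obtain ⟨γ, δ, hγδ⟩ := Submodule.mem_span_pair.mp (hsub (hπS' t))
          have hP0' : ∀ a : Fin m, π' t (a, 0) = γ * xs t1 a := by
            intro a
            have := congrFun hγδ (a, 0)
            simp only [Pi.add_apply, Pi.smul_apply, smul_eq_mul, tens, ee] at this ⊢
            rw [← this]
            norm_num
          have hP1' : ∀ a : Fin m, π' t (a, 1) = δ * xs t2 a := by
            intro a
            have := congrFun hγδ (a, 1)
            simp only [Pi.add_apply, Pi.smul_apply, smul_eq_mul, tens, ee] at this ⊢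
            rw [← this]
            norm_num
          by_cases hγ : γ = 0
          · rw [hP0' α, hγ, zero_mul, zero_mul]
          · by_cases hδ : δ = 0
            · rw [hP1' α', hδ, zero_mul, map_zero, mul_zero]
            · exfalso
              have hy'0 : ys' t 0 ≠ 0 := by
                intro h0
                apply hx1
                funext a
                have h5 : π' t (a, 0) = xs' t a * ys' t 0 := rfl
                have h6 := (hP0' a).symm.trans h5
                rw [h0, mul_zero] at h6
                exact (mul_eq_zero.mp h6).resolve_left hγ
              have hy'1 : ys' t 1 ≠ 0 := by
                intro h0
                apply hx2
                funext a
                have h5 : π' t (a, 1) = xs' t a * ys' t 1 := rfl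
                have h6 := (hP1' a).symm.trans h5
                rw [h0, mul_zero] at h6
                exact (mul_eq_zero.mp h6).resolve_left hδ
              have h1 : xs t1 = (γ⁻¹ * ys' t 0) • xs' t := by
                funext a
                have h5 : γ * xs t1 a = xs' t a * ys' t 0 := (hP0' a).symm.trans rfl
                simp only [Pi.smul_apply, smul_eq_mul]
                field_simp
                linear_combination h5
              have h2 : xs t2 = (δ⁻¹ * ys' t 1) • xs' t := by
                funext a
                have h5 : δ * xs t2 a = xs' t a * ys' t 1 := (hP1' a).symm.trans rfl
                simp only [Pi.smul_apply, smul_eq_mul]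
                field_simp
                linear_combination h5
              rw [h1, h2] at hx
              exact not_li_smul_pair _ _ _ hx
        -- evaluate the matrix identity at a good entry
        obtain ⟨α0, hα0'⟩ := Function.ne_iff.mp hx1
        obtain ⟨α1, hα1'⟩ := Function.ne_iff.mp hx2
        have hα0 : xs t1 α0 ≠ 0 := by simpa using hα0'
        have hα1 : xs t2 α1 ≠ 0 := by simpa using hα1'
        have hent := hq' (α0, 0) (α1, 1)
        have hlhs : (∑ b : Fin 2, g' b (α0, 0) * (starRingEnd ℂ) (g' b (α1, 1)))
            = xs t1 α0 * (starRingEnd ℂ) (xs t2 α1) * (starRingEnd ℂ) cval := by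
          rw [hcval]
          rw [map_sum, Finset.mul_sum]
          refine Finset.sum_congr rfl fun b _ => ?_
          have e0 : g' b (α0, 0) = xs t1 α0 * lc b := by simp [hg', hΨ₂]
          have e1 : g' b (α1, 1) = xs t2 α1 * mc b := by simp [hg', hΨ₂]
          rw [e0, e1]
          simp only [map_mul, Complex.conj_conj]
          ring
        have hrhs : (∑ t : Fin T', π' t (α0, 0) * (starRingEnd ℂ) (π' t (α1, 1))) = 0 :=
          Finset.sum_eq_zero fun t _ => hzero t α0 α1
        rw [hlhs, hrhs] at hent
        have : (starRingEnd ℂ) cval = 0 := by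
          rcases mul_eq_zero.mp hent with h | h
          · rcases mul_eq_zero.mp h with h' | h'
            · exact absurd h' hα0
            · exact absurd h' (by simpa using hα1)
          · exact h
        exact hcz (by simpa using congrArg (starRingEnd ℂ) this)
    · -- xs t1, xs t2 parallel : V = x ⊗ ℂ²
      obtain ⟨c, hc⟩ := pair_eq_smul hx hx1
      have hcne : c ≠ 0 := by
        rintro rfl
        rw [zero_smul] at hc
        exact hx2 hc
      have htop : span ℂ ({lc, mc} : Set (Fin 2 → ℂ)) = ⊤ := by
        apply Submodule.eq_top_of_finrank_eq
        rw [finrank_span_pair_eq hlcmc]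
        simp
      have hmemee : ∀ j : ℕ, tens (xs t1) (ee 2 j) ∈ V := by
        intro j
        have hj : (ee 2 j : Fin 2 → ℂ) ∈ span ℂ ({lc, mc} : Set (Fin 2 → ℂ)) := by
          rw [htop]; trivial
        obtain ⟨r, s', hrs⟩ := Submodule.mem_span_pair.mp hj
        have heq : tens (xs t1) (ee 2 j)
            = r • tens (xs t1) lc + (s' * c⁻¹) • tens (xs t2) mc := by
          funext p
          have h7 := congrFun hrs p.2
          simp only [Pi.add_apply, Pi.smul_apply, smul_eq_mul] at h7
          have h8 : xs t2 p.1 = c * xs t1 p.1 := by rw [hc]; rfl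
          simp only [tens, Pi.add_apply, Pi.smul_apply, smul_eq_mul, h8, ← h7]
          field_simp
        rw [heq, hVW]
        exact add_mem (smul_mem _ _ (subset_span (Set.mem_insert _ _)))
          (smul_mem _ _ (subset_span (Set.mem_insert_of_mem _ rfl)))
      have hliee := tens_ee_li hx1 hx1
      have hle : span ℂ ({tens (xs t1) (ee 2 0), tens (xs t1) (ee 2 1)} :
          Set (Fin m × Fin 2 → ℂ)) ≤ V := by
        rw [span_le]
        intro u hu
        simp only [Set.mem_insert_iff, Set.mem_singleton_iff] at hu
        rcases hu with rfl | rfl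
        · exact hmemee 0
        · exact hmemee 1
      have hVE : span ℂ ({tens (xs t1) (ee 2 0), tens (xs t1) (ee 2 1)} :
          Set (Fin m × Fin 2 → ℂ)) = V :=
        Submodule.eq_of_le_of_finrank_le hle
          (by rw [hdim, finrank_span_pair_eq hliee])
      refine ⟨xs t1, xs t1, ee 2 0, ee 2 1, ?_, ?_, ?_, hVE.symm⟩
      · simp [ee, Fin.sum_univ_two]
      · simp [ee, Fin.sum_univ_two]
      · simp [ee, Fin.sum_univ_two]

  · -- degenerate case: contradiction
    obtain ⟨z, a1, a2, hga, hgb, hzor⟩ := exists_common_of_not_li hG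
    have hzne : z ≠ 0 := by
      intro hz0
      rw [hz0, smul_zero] at hga hgb
      have hgall : ∀ β : Fin 2, g β = 0 := by
        intro β; fin_cases β; exacts [hga, hgb]
      apply hli.ne_zero 0
      show v = 0
      funext p
      obtain ⟨α, β⟩ := p
      rw [← hg0 β α, hgall β]
      rfl
    have hzU : z ∈ span ℂ (Set.range π) := by
      rcases hzor with h | h <;> rw [h]
      · exact hgS 0
      · exact hgS 1
    have hall : ∀ t, ∃ c : ℂ, π t = c • z := by
      intro t
      have h1 : π t ∈ ℂ ∙ z := by
        have h2 : span ℂ (Set.range g) ≤ ℂ ∙ z := by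
          rw [span_le]
          rintro _ ⟨b, rfl⟩
          apply Submodule.mem_span_singleton.mpr
          fin_cases b
          · exact ⟨a1, hga.symm⟩
          · exact ⟨a2, hgb.symm⟩
        exact h2 (hπS t)
      obtain ⟨c, hc⟩ := Submodule.mem_span_singleton.mp h1
      exact ⟨c, hc.symm⟩
    choose ct hct using hall
    obtain ⟨dc, hdc⟩ := mem_span_range_iff_exists_fun ℂ |>.mp hzU
    have hsum1 : (∑ t, dc t * ct t) = 1 := by
      obtain ⟨p0, hp0'⟩ := Function.ne_iff.mp hzne
      have hp0 : z p0 ≠ 0 := by simpa using hp0'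
      have h3 := congrFun hdc p0
      simp only [Finset.sum_apply, Pi.smul_apply, smul_eq_mul] at h3
      have h4 : (∑ t, dc t * ct t) * z p0 = z p0 := by
        calc (∑ t, dc t * ct t) * z p0 = ∑ t, dc t * π t p0 := by
              rw [Finset.sum_mul]
              refine Finset.sum_congr rfl fun t _ => ?_
              have h5 : π t p0 = ct t * z p0 := by rw [hct t]; rfl
              rw [h5]; ring
          _ = z p0 := h3
      exact mul_right_cancel₀ hp0 (by rw [h4, one_mul])
    have hex : ∃ t, dc t * ct t ≠ 0 := by
      by_contra hno
      push_neg at hno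
      rw [Finset.sum_eq_zero (fun t _ => hno t)] at hsum1
      exact zero_ne_one hsum1
    obtain ⟨t0, ht0⟩ := hex
    have hct0 : ct t0 ≠ 0 := fun h => ht0 (by rw [h, mul_zero])
    have hzprod : z = tens ((ct t0)⁻¹ • xs t0) (ys t0) := by
      rw [tens_smul_left]
      have : π t0 = ct t0 • z := hct t0
      rw [show tens (xs t0) (ys t0) = π t0 from rfl, this, smul_smul,
        inv_mul_cancel₀ hct0, one_smul]
    set efun : Fin 2 → ℂ := ![a1, a2] with hefun
    have hgz : ∀ β : Fin 2, g β = efun β • z := by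
      intro β; fin_cases β
      · simpa [hefun] using hga
      · simpa [hefun] using hgb
    set x0 : Fin m → ℂ := (ct t0)⁻¹ • xs t0 with hx0
    set y0 : Fin 2 → ℂ := ys t0 with hy0
    have hv2 : v = y0 0 • tens x0 efun := by
      funext p
      obtain ⟨α, β⟩ := p
      rw [← hg0 β α, hgz β, hzprod]
      simp [tens, Pi.smul_apply, smul_eq_mul]
      ring
    have hw2 : w = y0 1 • tens x0 efun := by
      funext p
      obtain ⟨α, β⟩ := p
      rw [← hg1 β α, hgz β, hzprod]
      simp [tens, Pi.smul_apply, smul_eq_mul]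
      ring
    rw [hv2, hw2] at hli
    exact absurd hli (not_li_smul_pair _ _ _)

end Forward

section Main

open Submodule Set Module

lemma reverse_dir {m : ℕ} (V : Submodule ℂ (Fin m × Fin 2 → ℂ))
    (x y : Fin m → ℂ) (f₀ f₁ : Fin 2 → ℂ)
    (h0 : (∑ b : Fin 2, (starRingEnd ℂ) (f₀ b) * f₀ b) = 1)
    (h1 : (∑ b : Fin 2, (starRingEnd ℂ) (f₁ b) * f₁ b) = 1)
    (h2 : (∑ b : Fin 2, (starRingEnd ℂ) (f₀ b) * f₁ b) = 0)
    (hV : V = Submodule.span ℂ {tens x f₀, tens y f₁}) : IsEBSpace V := by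
  intro k _ Ψ hsl
  have hmem : ∀ ℓ : Fin k, ∃ c d : ℂ,
      c • tens x f₀ + d • tens y f₁ = fun ab : Fin m × Fin 2 => Ψ (ab.1, ab.2, ℓ) := by
    intro ℓ
    exact Submodule.mem_span_pair.mp (hV ▸ hsl ℓ)
  choose c d hcd using hmem
  refine ⟨2, ![x, y], ![c, d], ?_⟩
  apply Matrix.ext
  intro p q
  have hP : ∀ (a : Fin m) (b : Fin 2) (ℓ : Fin k),
      Ψ (a, b, ℓ) = c ℓ * (x a * f₀ b) + d ℓ * (y a * f₁ b) := by
    intro a b ℓ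
    have := congrFun (hcd ℓ) (a, b)
    simpa [tens, Pi.add_apply, Pi.smul_apply, smul_eq_mul] using this.symm
  have h2c : (∑ b : Fin 2, f₀ b * (starRingEnd ℂ) (f₁ b)) = 0 := by
    have := congrArg (starRingEnd ℂ) h2
    simpa [map_sum, map_mul, mul_comm] using this
  have h2c' : (∑ b : Fin 2, f₁ b * (starRingEnd ℂ) (f₀ b)) = 0 := by
    rw [← h2]
    exact Finset.sum_congr rfl fun b _ => by ring
  have h0' : (∑ b : Fin 2, f₀ b * (starRingEnd ℂ) (f₀ b)) = 1 := by
    rw [← h0]; exact Finset.sum_congr rfl fun b _ => by ring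
  have h1' : (∑ b : Fin 2, f₁ b * (starRingEnd ℂ) (f₁ b)) = 1 := by
    rw [← h1]; exact Finset.sum_congr rfl fun b _ => by ring
  show (∑ b : Fin 2, Ψ (p.1, b, p.2) * (starRingEnd ℂ) (Ψ (q.1, b, q.2))) = _
  rw [Matrix.sum_apply]
  simp only [hP, map_add, map_mul, Matrix.of_apply, Fin.sum_univ_two]
  simp only [Matrix.cons_val_zero, Matrix.cons_val_one, Matrix.head_cons]
  rw [Fin.sum_univ_two] at h0' h1' h2c h2c'
  linear_combination
    (c p.2 * x p.1 * (starRingEnd ℂ) (c q.2) * (starRingEnd ℂ) (x q.1)) * h0' +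
    (d p.2 * y p.1 * (starRingEnd ℂ) (d q.2) * (starRingEnd ℂ) (y q.1)) * h1' +
    (c p.2 * x p.1 * (starRingEnd ℂ) (d q.2) * (starRingEnd ℂ) (y q.1)) * h2c +
    (d p.2 * y p.1 * (starRingEnd ℂ) (c q.2) * (starRingEnd ℂ) (x q.1)) * h2c'

end Main

/-- A 2-dimensional subspace of `ℂ^m ⊗ ℂ²` is EB iff it is spanned by `x ⊗ f₀, y ⊗ f₁`
for some vectors `x, y` and an orthonormal basis `f₀, f₁` of `ℂ²`. -/
theorem eb_two_dim_qubit {m : ℕ} (V : Submodule ℂ (Fin m × Fin 2 → ℂ))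
    (hdim : Module.finrank ℂ V = 2) :
    IsEBSpace V ↔
      ∃ (x y : Fin m → ℂ) (f₀ f₁ : Fin 2 → ℂ),
        (∑ b : Fin 2, (starRingEnd ℂ) (f₀ b) * f₀ b) = 1 ∧
        (∑ b : Fin 2, (starRingEnd ℂ) (f₁ b) * f₁ b) = 1 ∧
        (∑ b : Fin 2, (starRingEnd ℂ) (f₀ b) * f₁ b) = 0 ∧
        V = Submodule.span ℂ {tens x f₀, tens y f₁} := by
  constructor
  · exact fun h => forward_dir V hdim h
  · rintro ⟨x, y, f₀, f₁, h0, h1, h2, hV⟩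
    exact reverse_dir V x y f₀ f₁ h0 h1 h2 hV
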